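/- Let A ⊂ ℝⁿ be convex with λ(A) finite and positive, and for ε > 0 let A_ε = {y : B_ε(y) ⊂ A}. There exists C > 0, depending only on ε and λ(A), with the following property: for any convex ψ : A → ℝ with ∫_A ψ dλ ≤ 0, one has ψ(y) ≤ -C · inf_A ψ for all y ∈ A_ε. -/

import Mathlib

open MeasureTheory Metric Set

/-- For `A` convex with finite positive volume and `ε > 0`, there exists `C > 0`,
depending only on `ε` and `λ(A)`, such that every convex `ψ : A → ℝ` with
`∫_A ψ ≤ 0` satisfies `ψ y ≤ -C · inf_A ψ` for all `y ∈ A_ε = {y : B_ε(y) ⊆ A}`. -/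
theorem stmt4 {n : ℕ} (A : Set (EuclideanSpace ℝ (Fin n)))
    (hconv : Convex ℝ A) (hpos : 0 < volume A) (hfin : volume A < ⊤)
    (ε : ℝ) (hε : 0 < ε) :
    ∃ C > (0 : ℝ), ∀ ψ : EuclideanSpace ℝ (Fin n) → ℝ,
      ConvexOn ℝ A ψ → IntegrableOn ψ A → (∫ y in A, ψ y) ≤ 0 →
      ∀ m : ℝ, IsGLB (ψ '' A) m →
      ∀ y, Metric.ball y ε ⊆ A → ψ y ≤ -C * m := by
  set r : ℝ := ε / 2 with hrdef
  have hr0 : 0 < r := by positivity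
  set vK : ℝ := (volume (closedBall (0 : EuclideanSpace ℝ (Fin n)) r)).toReal with hvKdef
  have hvK0 : 0 < vK :=
    ENNReal.toReal_pos (measure_closedBall_pos _ _ hr0).ne' measure_closedBall_lt_top.ne
  set vA : ℝ := (volume A).toReal with hvAdef
  have hvA0 : 0 < vA := ENNReal.toReal_pos hpos.ne' hfin.ne
  refine ⟨vA / vK, by positivity, ?_⟩
  intro ψ hψ hint hint0 m hm y hy
  set K : Set (EuclideanSpace ℝ (Fin n)) := closedBall y r with hKdef
  have hKball : K ⊆ ball y ε := closedBall_subset_ball (by simp [hrdef]; linarith)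
  have hKA : K ⊆ A := hKball.trans hy
  have hvolK : (volume K).toReal = vK := by
    rw [hKdef, Measure.addHaar_closedBall_center volume y r, hvKdef]
  have hmle : ∀ x ∈ A, m ≤ ψ x := fun x hx => hm.1 ⟨x, hx, rfl⟩
  -- `m ≤ 0`
  have hconst : IntegrableOn (fun _ => m) A volume :=
    integrableOn_const hfin.ne
  have haem : ∀ᵐ x ∂volume.restrict A, m ≤ ψ x := by
    filter_upwards [ae_restrict_mem₀ (hconv.nullMeasurableSet volume)] with x hx using hmle x hx
  have hmA : m * vA ≤ ∫ x in A, ψ x := by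
    have := setIntegral_mono_ae_restrict hconst hint haem
    simpa [mul_comm, measureReal_def] using this
  have hm0 : m ≤ 0 := by nlinarith [hmA, hint0, hvA0]
  -- Jensen on the closed ball `K`
  haveI : IsFiniteMeasure (volume.restrict K) :=
    ⟨by rw [Measure.restrict_apply_univ]; exact measure_closedBall_lt_top⟩
  haveI : NeZero (volume.restrict K) := by
    constructor
    rw [Ne, Measure.restrict_eq_zero]
    exact (measure_closedBall_pos _ _ hr0).ne'
  have hconvK : ConvexOn ℝ K ψ := hψ.subset hKA (convex_closedBall y r)
  have hcont : ContinuousOn ψ K :=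
    ((hψ.subset hy (convex_ball y ε)).continuousOn isOpen_ball).mono hKball
  have hid : Integrable (fun x : EuclideanSpace ℝ (Fin n) => x) (volume.restrict K) :=
    (continuous_id.continuousOn).integrableOn_compact (isCompact_closedBall y r)
  have hψK : IntegrableOn ψ K := hint.mono_set hKA
  have hfs : ∀ᵐ x ∂volume.restrict K, x ∈ K := ae_restrict_mem measurableSet_closedBall
  have jensen :
      ψ (⨍ x in K, x) ≤ ⨍ x in K, ψ x :=
    hconvK.map_average_le hcont isClosed_closedBall hfs hid hψK
  -- the barycenter of the ball is `y`
  have hbary : (⨍ x in K, x) = y := by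
    have hmp : MeasurePreserving (fun x : EuclideanSpace ℝ (Fin n) => (2 : ℝ) • y - x) volume volume := by
      have h1 : MeasurePreserving (fun x : EuclideanSpace ℝ (Fin n) => (2 : ℝ) • y + -x) volume volume :=
        (measurePreserving_add_left volume ((2 : ℝ) • y)).comp
          (Measure.measurePreserving_neg volume)
      simpa [sub_eq_add_neg] using h1
    have hemb : MeasurableEmbedding (fun x : EuclideanSpace ℝ (Fin n) => (2 : ℝ) • y - x) := by
      have := ((Homeomorph.neg (EuclideanSpace ℝ (Fin n))).trans
        (Homeomorph.addLeft ((2 : ℝ) • y))).measurableEmbedding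
      convert this using 1; funext x; simp [sub_eq_add_neg]
    have hdist : ∀ x : EuclideanSpace ℝ (Fin n), dist ((2 : ℝ) • y - x) y = dist x y := by
      intro x
      rw [dist_eq_norm, dist_eq_norm, two_smul, ← norm_neg]
      congr 1
      abel
    have hpre : (fun x : EuclideanSpace ℝ (Fin n) => (2 : ℝ) • y - x) ⁻¹' K = K := by
      ext x
      simp only [mem_preimage, hKdef, mem_closedBall, hdist]
    have h1 : ∫ x in K, ((2 : ℝ) • y - x) = ∫ x in K, x := by
      have := hmp.setIntegral_preimage_emb hemb (fun x => x) K
      rwa [hpre] at this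
    have h2 : ∫ x in K, ((2 : ℝ) • y - x) =
        (volume K).toReal • ((2 : ℝ) • y) - ∫ x in K, x := by
      rw [integral_sub (by simp [integrableOn_const, measure_closedBall_lt_top]) hid,
        setIntegral_const, measureReal_def]
    have h3 : ∫ x in K, x = (volume K).toReal • y := by
      have h4 : (2 : ℝ) • (∫ x in K, x) = (2 : ℝ) • ((volume K).toReal • y) := by
        rw [two_smul, smul_comm ((2:ℝ)) ((volume K).toReal) y]
        nth_rewrite 1 [← h1]
        rw [h2]
        abel
      exact smul_right_injective _ (two_ne_zero (α := ℝ)) h4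
    rw [setAverage_eq, measureReal_def, h3, smul_smul, hvolK, inv_mul_cancel₀ hvK0.ne', one_smul]
  rw [hbary] at jensen
  -- bound the average of `ψ` over `K`
  have hKdiff : (volume (A \ K)).toReal ≤ vA :=
    ENNReal.toReal_mono hfin.ne (measure_mono diff_subset)
  have hconstd : IntegrableOn (fun _ => m) (A \ K) volume :=
    integrableOn_const ((measure_mono diff_subset).trans_lt hfin).ne
  have haemd : ∀ᵐ x ∂volume.restrict (A \ K), m ≤ ψ x := by
    filter_upwards [ae_restrict_mem₀
      ((hconv.nullMeasurableSet volume).diff measurableSet_closedBall.nullMeasurableSet)] with x hx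
      using hmle x hx.1
  have hdiffint : m * (volume (A \ K)).toReal ≤ ∫ x in A \ K, ψ x := by
    have := setIntegral_mono_ae_restrict hconstd (hint.mono_set diff_subset) haemd
    simpa [mul_comm, measureReal_def] using this
  have hsplit : ∫ x in A \ K, ψ x = (∫ x in A, ψ x) - ∫ x in K, ψ x :=
    integral_diff measurableSet_closedBall hint hKA
  have hKint : ∫ x in K, ψ x ≤ -m * vA := by
    have h1 : ∫ x in K, ψ x ≤ -(m * (volume (A \ K)).toReal) := by linarith
    nlinarith [hm0, hKdiff, h1]
  have havg : (⨍ x in K, ψ x) = vK⁻¹ * ∫ x in K, ψ x := by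
    rw [setAverage_eq, measureReal_def, hvolK, smul_eq_mul]
  calc ψ y ≤ ⨍ x in K, ψ x := jensen
    _ = vK⁻¹ * ∫ x in K, ψ x := havg
    _ ≤ vK⁻¹ * (-m * vA) := by
        apply mul_le_mul_of_nonneg_left hKint (by positivity)
    _ = -(vA / vK) * m := by rw [div_eq_mul_inv]; ring
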